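/- Let 0 < p < ∞ and let v be an admissible weight function. If sup{ v(x)/v(y) : 0 ≤ x ≤ y } = ∞, then there exists f ∈ L^p_v(ℝ₊) such that T_t f does not converge to 0 in norm as t → ∞. -/

import Mathlib

open MeasureTheory Filter Set
open scoped ENNReal

/-- The `L^p_v` norm of a function on `[0,∞)`:
`‖f‖ = (∫₀^∞ |f(x)|^p v(x) dx)^(1/p)`. -/
noncomputable def lpNorm (p : ℝ) (v : ℝ → ℝ) (f : ℝ → ℝ) : ℝ :=
  (∫ x in Set.Ici (0:ℝ), |f x| ^ p * v x) ^ (1 / p)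

/-- Membership in the weighted Lebesgue space `L^p_v(ℝ₊)`. -/
def MemLpW (p : ℝ) (v : ℝ → ℝ) (f : ℝ → ℝ) : Prop :=
  AEStronglyMeasurable f (volume.restrict (Set.Ici (0:ℝ))) ∧
    IntegrableOn (fun x => |f x| ^ p * v x) (Set.Ici (0:ℝ))

/-- The left translation operator `(T_t f)(x) = f (x + t)`. -/
def translateW (t : ℝ) (f : ℝ → ℝ) : ℝ → ℝ := fun x => f (x + t)

/-- `v` is an admissible weight function: strictly positive, locally integrable on `[0,∞)`,
and there are `M ≥ 1`, `w ≥ 0` with `v x ≤ M * exp (w*t) * v (x+t)` for all `x, t ≥ 0`. -/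
def AdmissibleWeight (v : ℝ → ℝ) : Prop :=
  (∀ x, 0 ≤ x → 0 < v x) ∧
  (∀ a, 0 ≤ a → IntegrableOn v (Set.Icc (0:ℝ) a)) ∧
  ∃ M, 1 ≤ M ∧ ∃ w, 0 ≤ w ∧ ∀ x, 0 ≤ x → ∀ t, 0 ≤ t →
    v x ≤ M * Real.exp (w * t) * v (x + t)

/-- The set `{ v x / v y : 0 ≤ x ≤ y }`. -/
def ratioSet (v : ℝ → ℝ) : Set ℝ := {r | ∃ x y, 0 ≤ x ∧ x ≤ y ∧ r = v x / v y}

theorem lp_exists_not_tendsto_zero_of_unbounded_ratio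
    (p : ℝ) (hp : 0 < p) (v : ℝ → ℝ) (hv : AdmissibleWeight v)
    (hsup : ∀ B : ℝ, ∃ r ∈ ratioSet v, B < r) :
    ∃ f, MemLpW p v f ∧
      ¬ Filter.Tendsto (fun t => lpNorm p v (translateW t f)) Filter.atTop (nhds 0) := by
  obtain ⟨hvpos, hvint, M, hM, w, hw0, hadm⟩ := hv
  have hM0 : (0:ℝ) < M := lt_of_lt_of_le one_pos hM
  -- the case w = 0 is impossible
  rcases hw0.lt_or_eq with hw | hw
  swap
  · exfalso
    obtain ⟨r, ⟨x, y, hx0, hxy, rfl⟩, hBr⟩ := hsup M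
    have hvy : 0 < v y := hvpos y (hx0.trans hxy)
    have h1 : v x ≤ M * Real.exp (w * (y - x)) * v y := by
      have h := hadm x hx0 (y - x) (by linarith)
      have hxy' : x + (y - x) = y := by ring
      rwa [hxy'] at h
    rw [← hw, zero_mul, Real.exp_zero, mul_one] at h1
    have : v x / v y ≤ M := (div_le_iff₀ hvy).mpr h1
    linarith
  -- constants
  set K : ℝ := M * Real.exp w with hKdef
  have hexpw : (1:ℝ) ≤ Real.exp w := Real.one_le_exp hw0
  have hK1 : (1:ℝ) ≤ K := by nlinarith
  have hK0 : (0:ℝ) < K := lt_of_lt_of_le one_pos hK1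
  -- key selection lemma
  have key : ∀ C Y : ℝ, ∃ q : ℝ × ℝ,
      0 ≤ q.1 ∧ Y + 1 ≤ q.2 - 1 - q.1 ∧ C * v q.2 < v q.1 := by
    intro C Y
    set T : ℝ := max (Y + 2) 0 with hTdef
    have hT0 : 0 ≤ T := le_max_right _ _
    have hTY : Y + 2 ≤ T := le_max_left _ _
    obtain ⟨r, ⟨x, y, hx0, hxy, rfl⟩, hBr⟩ := hsup (max C (M * Real.exp (w * T)))
    have hvy : 0 < v y := hvpos y (hx0.trans hxy)
    have hvxy : max C (M * Real.exp (w * T)) * v y < v x := (lt_div_iff₀ hvy).mp hBr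
    have h1 : v x ≤ M * Real.exp (w * (y - x)) * v y := by
      have h := hadm x hx0 (y - x) (by linarith)
      have hxy' : x + (y - x) = y := by ring
      rwa [hxy'] at h
    have h2 : M * Real.exp (w * T) * v y < M * Real.exp (w * (y - x)) * v y :=
      lt_of_le_of_lt (mul_le_mul_of_nonneg_right (le_max_right _ _) hvy.le)
        (lt_of_lt_of_le hvxy h1)
    have h3 : Real.exp (w * T) < Real.exp (w * (y - x)) := by
      have := (mul_lt_mul_iff_left₀ hvy).mp h2
      exact (mul_lt_mul_iff_right₀ hM0).mp this
    have h4 : T < y - x := by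
      have := Real.exp_lt_exp.mp h3
      exact (mul_lt_mul_iff_right₀ hw).mp this
    refine ⟨(x, y), hx0, by simp only; linarith, ?_⟩
    exact lt_of_le_of_lt (mul_le_mul_of_nonneg_right (le_max_left _ _) hvy.le) hvxy
  choose F hF1 hF2 hF3 using key
  -- the sequence of pairs
  let Cc : ℕ → ℝ := fun n => 2 ^ n * K ^ 2
  let q : ℕ → ℝ × ℝ := fun n =>
    Nat.rec (F (Cc 0) 0) (fun m prev => F (Cc (m + 1)) (max ((m : ℝ) + 1) prev.2)) n
  set xx : ℕ → ℝ := fun n => (q n).1 with hxxdef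
  set yy : ℕ → ℝ := fun n => (q n).2 with hyydef
  have hx0 : ∀ n, 0 ≤ xx n := by
    intro n; cases n with
    | zero => exact hF1 _ _
    | succ m => exact hF1 _ _
  have hgap : ∀ n : ℕ, (n : ℝ) + 1 ≤ yy n - 1 - xx n := by
    intro n; cases n with
    | zero => exact le_trans (by norm_num) (hF2 (Cc 0) 0)
    | succ m =>
      have h := hF2 (Cc (m + 1)) (max ((m : ℝ) + 1) (yy m))
      have h2 : (m : ℝ) + 1 ≤ max ((m : ℝ) + 1) (yy m) := le_max_left _ _
      push_cast
      have : ((m : ℝ) + 1) + 1 ≤ (q (m+1)).2 - 1 - (q (m+1)).1 := by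
        refine le_trans (by linarith) h
      simpa [hxxdef, hyydef] using this
  have hCmain : ∀ n, 2 ^ n * K ^ 2 * v (yy n) < v (xx n) := by
    intro n; cases n with
    | zero => exact hF3 _ _
    | succ m => exact hF3 _ _
  have hsep : ∀ n, yy n + 1 ≤ yy (n + 1) - 1 := by
    intro n
    have h := hF2 (Cc (n + 1)) (max ((n : ℝ) + 1) (yy n))
    have h2 : yy n ≤ max ((n : ℝ) + 1) (yy n) := le_max_right _ _
    have h3 : 0 ≤ xx (n + 1) := hx0 (n + 1)
    have h4 : max ((n : ℝ) + 1) (yy n) + 1 ≤ yy (n+1) - 1 - xx (n+1) := h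
    linarith
  have hy1 : ∀ n : ℕ, (n : ℝ) + 2 ≤ yy n := by
    intro n; have h1 := hgap n; have h2 := hx0 n; linarith
  have hymono : ∀ m n : ℕ, m < n → yy m + 1 ≤ yy n - 1 := by
    intro m n hmn
    induction n with
    | zero => omega
    | succ k ih =>
      rcases Nat.lt_succ_iff_lt_or_eq.mp hmn with h | h
      · have h1 := ih h
        have h2 := hsep k
        linarith
      · subst h; exact hsep m
  set S : ℕ → Set ℝ := fun n => Ico (yy n - 1) (yy n) with hSdef
  have hSdisj : ∀ m n : ℕ, m ≠ n → ∀ x, x ∈ S m → x ∉ S n := by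
    intro m n hmn x hxm hxn
    rcases lt_or_gt_of_ne hmn with h | h
    · have h0 := hymono m n h; have h1 := hxm.2; have h2 := hxn.1
      linarith
    · have h0 := hymono n m h; have h1 := hxn.2; have h2 := hxm.1
      linarith
  have hSpos : ∀ n, S n ⊆ Ici (0:ℝ) := by
    intro n z hz
    have h1 := hy1 n
    have h2 := hz.1
    have : (0:ℝ) ≤ (n:ℝ) := Nat.cast_nonneg n
    simp only [mem_Ici]
    linarith
  have hSsub : ∀ n, S n ⊆ Icc 0 (yy n) := fun n z hz => ⟨hSpos n hz, hz.2.le⟩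
  have hSvol : ∀ n, volume (S n) = 1 := by
    intro n
    rw [hSdef]
    simp only [Real.volume_Ico, sub_sub_cancel, ENNReal.ofReal_one]
  have hIint : ∀ n, IntegrableOn v (S n) := by
    intro n
    exact (hvint (yy n) (by have := hy1 n; have : (0:ℝ) ≤ (n:ℝ) := Nat.cast_nonneg n; linarith)).mono_set (hSsub n)
  set I : ℕ → ℝ := fun n => ∫ x in S n, v x with hIdef
  have hvSnn : ∀ n, 0 ≤ᵐ[volume.restrict (S n)] v := by
    intro n
    exact (ae_restrict_iff' measurableSet_Ico).mpr
      (Eventually.of_forall fun x hx => (hvpos x (hSpos n hx)).le)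
  have hIpos : ∀ n, 0 < I n := by
    intro n
    rw [hIdef]
    simp only
    rw [setIntegral_pos_iff_support_of_nonneg_ae (hvSnn n) (hIint n)]
    have hsub : S n ⊆ Function.support v := fun x hx => (hvpos x (hSpos n hx)).ne'
    rw [inter_eq_self_of_subset_right hsub, hSvol n]
    norm_num
  have hIub : ∀ n, I n ≤ K * v (yy n) := by
    intro n
    have hvyn : 0 < v (yy n) := hvpos _ (by have := hy1 n; have : (0:ℝ) ≤ (n:ℝ) := Nat.cast_nonneg n; linarith)
    have hupper : ∀ x ∈ S n, v x ≤ K * v (yy n) := by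
      intro x hx
      have hx0' : 0 ≤ x := hSpos n hx
      have h1 : v x ≤ M * Real.exp (w * (yy n - x)) * v (yy n) := by
        have h := hadm x hx0' (yy n - x) (by have := hx.2; linarith)
        have e : x + (yy n - x) = yy n := by ring
        rwa [e] at h
      have h2 : Real.exp (w * (yy n - x)) ≤ Real.exp w := by
        apply Real.exp_le_exp.mpr
        have := hx.1
        nlinarith
      have h3 : (0:ℝ) < Real.exp (w * (yy n - x)) := Real.exp_pos _
      calc v x ≤ M * Real.exp (w * (yy n - x)) * v (yy n) := h1
        _ ≤ M * Real.exp w * v (yy n) := by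
            have := mul_le_mul_of_nonneg_right (mul_le_mul_of_nonneg_left h2 hM0.le) hvyn.le
            linarith
        _ = K * v (yy n) := by rw [hKdef]
    calc I n ≤ ∫ _x in S n, K * v (yy n) := by
          refine setIntegral_mono_on (hIint n) ?_ measurableSet_Ico hupper
          exact integrableOn_const (by rw [hSvol n]; norm_num)
      _ = K * v (yy n) := by rw [setIntegral_const, measureReal_def, hSvol n]; simp
  -- the heights of the bumps
  set a : ℕ → ℝ := fun n => ((1/2) ^ n / I n) ^ (p⁻¹) with hadef
  have hbase_pos : ∀ n : ℕ, 0 < ((1:ℝ)/2) ^ n / I n := by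
    intro n; exact div_pos (pow_pos (by norm_num) n) (hIpos n)
  have ha_pos : ∀ n, 0 < a n := fun n => Real.rpow_pos_of_pos (hbase_pos n) _
  have hap : ∀ n, a n ^ p = (1/2) ^ n / I n := by
    intro n
    rw [hadef]
    exact Real.rpow_inv_rpow (hbase_pos n).le hp.ne'
  -- the function f
  set g : ℕ → ℝ → ℝ := fun n => (S n).indicator (fun _ => a n) with hgdef
  set f : ℝ → ℝ := fun x => ∑' n, g n x with hfdef
  have hgm : ∀ n, Measurable (g n) := fun n => measurable_const.indicator measurableSet_Ico
  have hfS : ∀ (n : ℕ) (x : ℝ), x ∈ S n → f x = a n := by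
    intro n x hx
    rw [hfdef]
    simp only
    rw [tsum_eq_single n (fun m hm => indicator_of_notMem (hSdisj n m (fun h => hm h.symm) x hx) _)]
    exact indicator_of_mem hx _
  have hf0 : ∀ x : ℝ, (∀ n, x ∉ S n) → f x = 0 := by
    intro x hx
    rw [hfdef]
    simp only
    calc (∑' n, g n x) = ∑' _n : ℕ, (0:ℝ) := tsum_congr fun n => indicator_of_notMem (hx n) _
      _ = 0 := tsum_zero
  have hfmeas : Measurable f := by
    apply measurable_of_tendsto_metrizable' atTop
      (fun k => Finset.measurable_sum (Finset.range k) fun n _ => hgm n)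
    rw [tendsto_pi_nhds]
    intro x
    by_cases hx : ∃ n, x ∈ S n
    · obtain ⟨n, hn⟩ := hx
      apply tendsto_atTop_of_eventually_const (i₀ := n + 1)
      intro k hk
      rw [Finset.sum_eq_single n
        (fun m _ hm => indicator_of_notMem (hSdisj n m (fun h => hm h.symm) x hn) _)
        (fun h => absurd (Finset.mem_range.mpr (by omega)) h)]
      rw [indicator_of_mem hn, hfS n x hn]
    · push_neg at hx
      have hz : ∀ n, g n x = 0 := fun n => indicator_of_notMem (hx n) _
      have : ∀ k, ∑ n ∈ Finset.range k, g n x = 0 := fun k => Finset.sum_eq_zero fun n _ => hz n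
      rw [hf0 x hx]
      simpa [this] using tendsto_const_nhds (x := (0:ℝ)) (f := atTop (α := ℕ))
  -- a.e. measurability of v on [0, ∞)
  have hIci : Ici (0:ℝ) = ⋃ n : ℕ, Icc (0:ℝ) n := by
    ext z
    simp only [mem_Ici, mem_iUnion, mem_Icc]
    constructor
    · intro hz
      obtain ⟨n, hn⟩ := exists_nat_ge z
      exact ⟨n, hz, hn⟩
    · rintro ⟨n, h1, _⟩; exact h1
  have hvmeas : AEStronglyMeasurable v (volume.restrict (Ici (0:ℝ))) := by
    rw [hIci, aestronglyMeasurable_iUnion_iff]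
    intro n
    exact (hvint n (Nat.cast_nonneg n)).1
  -- the integrand |f x| ^ p * v x
  set H : ℝ → ℝ := fun x => |f x| ^ p * v x with hHdef
  have hHpiece : ∀ (n : ℕ) (x : ℝ), x ∈ S n → H x = a n ^ p * v x := by
    intro n x hx
    rw [hHdef]
    simp only
    rw [hfS n x hx, abs_of_pos (ha_pos n)]
  have hHzero : ∀ x : ℝ, (∀ n, x ∉ S n) → H x = 0 := by
    intro x hx
    rw [hHdef]
    simp only
    rw [hf0 x hx, abs_zero, Real.zero_rpow hp.ne', zero_mul]
  have hHnn : ∀ x ∈ Ici (0:ℝ), 0 ≤ H x :=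
    fun x hx => mul_nonneg (Real.rpow_nonneg (abs_nonneg _) _) (hvpos x hx).le
  have hHpt : ∀ x : ℝ, ENNReal.ofReal (H x)
      = ∑' n, ENNReal.ofReal ((S n).indicator (fun z => a n ^ p * v z) x) := by
    intro x
    by_cases hx : ∃ n, x ∈ S n
    · obtain ⟨n, hn⟩ := hx
      rw [tsum_eq_single n (fun m hm => by
        rw [indicator_of_notMem (hSdisj n m (fun h => hm h.symm) x hn) _, ENNReal.ofReal_zero])]
      rw [indicator_of_mem hn, hHpiece n x hn]
    · push_neg at hx
      rw [hHzero x hx, ENNReal.ofReal_zero]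
      symm
      calc (∑' n, ENNReal.ofReal ((S n).indicator (fun z => a n ^ p * v z) x))
          = ∑' _n : ℕ, (0:ℝ≥0∞) := tsum_congr fun n => by
            rw [indicator_of_notMem (hx n) _, ENNReal.ofReal_zero]
        _ = 0 := tsum_zero
  -- measurability of H-type products
  have habsp : Measurable (fun x => |f x| ^ p) :=
    (Real.continuous_rpow_const hp.le).measurable.comp hfmeas.abs
  have hHmeas : AEStronglyMeasurable H (volume.restrict (Ici (0:ℝ))) :=
    habsp.aestronglyMeasurable.mul hvmeas
  -- the integrals of the pieces
  have hpieceint : ∀ n : ℕ, IntegrableOn (fun z => a n ^ p * v z) (S n) :=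
    fun n => (hIint n).const_mul _
  have hpieceval : ∀ n : ℕ, (∫ z in S n, a n ^ p * v z) = (1/2) ^ n := by
    intro n
    rw [integral_const_mul]
    have e0 : (∫ z in S n, v z) = I n := rfl
    rw [e0, hap n, div_mul_cancel₀ _ (hIpos n).ne']
  have hlintpiece : ∀ n : ℕ,
      (∫⁻ x in Ici (0:ℝ), ENNReal.ofReal ((S n).indicator (fun z => a n ^ p * v z) x))
        = ENNReal.ofReal ((1/2) ^ n) := by
    intro n
    have e1 : (fun x => ENNReal.ofReal ((S n).indicator (fun z => a n ^ p * v z) x))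
        = (S n).indicator (fun z => ENNReal.ofReal (a n ^ p * v z)) := by
      funext z
      by_cases hz : z ∈ S n
      · rw [indicator_of_mem hz, indicator_of_mem hz]
      · rw [indicator_of_notMem hz, indicator_of_notMem hz, ENNReal.ofReal_zero]
    rw [e1, lintegral_indicator measurableSet_Ico,
      Measure.restrict_restrict measurableSet_Ico,
      inter_eq_self_of_subset_left (hSpos n)]
    rw [← ofReal_integral_eq_lintegral_ofReal (hpieceint n)]
    · rw [hpieceval n]
    · exact (ae_restrict_iff' measurableSet_Ico).mpr (Eventually.of_forall fun z hz =>
        mul_nonneg (Real.rpow_nonneg (ha_pos n).le _) (hvpos z (hSpos n hz)).le)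
  have hHint : IntegrableOn H (Ici (0:ℝ)) := by
    refine ⟨hHmeas, ?_⟩
    rw [hasFiniteIntegral_iff_norm]
    have e2 : (∫⁻ x in Ici (0:ℝ), ENNReal.ofReal ‖H x‖)
        = ∫⁻ x in Ici (0:ℝ), ENNReal.ofReal (H x) := by
      refine lintegral_congr_ae ((ae_restrict_iff' measurableSet_Ici).mpr
        (Eventually.of_forall fun x hx => ?_))
      show ENNReal.ofReal ‖H x‖ = ENNReal.ofReal (H x)
      rw [Real.norm_of_nonneg (hHnn x hx)]
    rw [e2]
    have e3 : (∫⁻ x in Ici (0:ℝ), ENNReal.ofReal (H x))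
        = ∑' n, ∫⁻ x in Ici (0:ℝ), ENNReal.ofReal ((S n).indicator (fun z => a n ^ p * v z) x) := by
      rw [lintegral_congr fun x => hHpt x]
      refine lintegral_tsum fun n => ?_
      have h1 : AEMeasurable (fun z => a n ^ p * v z) (volume.restrict (Ici (0:ℝ))) :=
        hvmeas.aemeasurable.const_mul _
      exact ENNReal.measurable_ofReal.comp_aemeasurable (h1.indicator measurableSet_Ico)
    rw [e3]
    have e4 : ∀ n : ℕ,
        (∫⁻ x in Ici (0:ℝ), ENNReal.ofReal ((S n).indicator (fun z => a n ^ p * v z) x))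
          = ENNReal.ofReal ((1/2) ^ n) := hlintpiece
    rw [tsum_congr e4, ← ENNReal.ofReal_tsum_of_nonneg (fun n => by positivity)
      summable_geometric_two]
    exact ENNReal.ofReal_lt_top
  -- lower bound for the translates
  have hlow : ∀ n : ℕ, 1 ≤ lpNorm p v (translateW (yy n - 1 - xx n) f) := by
    intro n
    set t : ℝ := yy n - 1 - xx n with htdef
    have ht0 : 0 ≤ t := by have := hgap n; have : (0:ℝ) ≤ (n:ℝ) := Nat.cast_nonneg n; linarith [hgap n]
    set G : ℝ → ℝ := fun x => |f (x + t)| ^ p * v x with hGdef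
    have hGnn : ∀ x ∈ Ici (0:ℝ), 0 ≤ G x :=
      fun x hx => mul_nonneg (Real.rpow_nonneg (abs_nonneg _) _) (hvpos x hx).le
    have hGmeas : AEStronglyMeasurable G (volume.restrict (Ici (0:ℝ))) := by
      have h1 : Measurable (fun x => |f (x + t)| ^ p) :=
        (Real.continuous_rpow_const hp.le).measurable.comp
          ((hfmeas.comp (measurable_add_const t)).abs)
      exact h1.aestronglyMeasurable.mul hvmeas
    -- integrability of G on [0, ∞)
    have hGint : IntegrableOn G (Ici (0:ℝ)) := by
      have hHt : IntegrableOn H (Ici t) := hHint.mono_set (Ici_subset_Ici.mpr ht0)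
      have h1 : Integrable ((Ici t).indicator H) volume :=
        (integrable_indicator_iff measurableSet_Ici).mpr hHt
      have h2 : Integrable (fun x => (Ici t).indicator H (x + t)) volume :=
        h1.comp_add_right t
      have h3 : IntegrableOn (fun x => H (x + t)) (Ici (0:ℝ)) := by
        rw [← integrable_indicator_iff measurableSet_Ici]
        have e : (Ici (0:ℝ)).indicator (fun x => H (x + t)) =
            (fun x => (Ici t).indicator H (x + t)) := by
          funext z
          by_cases hz : z ∈ Ici (0:ℝ)
          · rw [indicator_of_mem hz]
            have : z + t ∈ Ici t := by simp only [mem_Ici] at *; linarith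
            rw [indicator_of_mem this]
          · rw [indicator_of_notMem hz]
            have : z + t ∉ Ici t := by simp only [mem_Ici] at *; intro h; exact hz (by linarith)
            rw [indicator_of_notMem this]
        rw [e]
        exact h2
      have h4 : IntegrableOn (fun x => M * Real.exp (w * t) * H (x + t)) (Ici (0:ℝ)) :=
        h3.const_mul _
      refine Integrable.mono' h4 hGmeas ?_
      refine (ae_restrict_iff' measurableSet_Ici).mpr (Eventually.of_forall fun x hx => ?_)
      rw [Real.norm_of_nonneg (hGnn x hx)]
      have hb : v x ≤ M * Real.exp (w * t) * v (x + t) := hadm x hx t ht0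
      have hrp : (0:ℝ) ≤ |f (x + t)| ^ p := Real.rpow_nonneg (abs_nonneg _) _
      calc G x = |f (x + t)| ^ p * v x := rfl
        _ ≤ |f (x + t)| ^ p * (M * Real.exp (w * t) * v (x + t)) :=
            mul_le_mul_of_nonneg_left hb hrp
        _ = M * Real.exp (w * t) * H (x + t) := by rw [hHdef]; ring
    -- the interval E on which the translate is large
    set E : Set ℝ := Ico (xx n) (xx n + 1) with hEdef
    have hEsub : E ⊆ Ici (0:ℝ) := fun z hz => le_trans (hx0 n) hz.1
    have hEvol : volume E = 1 := by
      rw [hEdef, Real.volume_Ico]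
      simp
    have hEshift : ∀ s ∈ E, s + t ∈ S n := by
      intro s hs
      obtain ⟨hs1, hs2⟩ := hs
      constructor
      · rw [htdef]; linarith
      · rw [htdef]; linarith
    have hGE : ∀ s ∈ E, G s = a n ^ p * v s := by
      intro s hs
      rw [hGdef]
      simp only
      rw [hfS n (s + t) (hEshift s hs), abs_of_pos (ha_pos n)]
    have hvxnpos : 0 < v (xx n) := hvpos _ (hx0 n)
    have hconst : ∀ s ∈ E, a n ^ p * (v (xx n) / K) ≤ G s := by
      intro s hs
      have hs0 : 0 ≤ s := hEsub hs
      have h1 : v (xx n) ≤ M * Real.exp (w * (s - xx n)) * v s := by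
        have h := hadm (xx n) (hx0 n) (s - xx n) (by linarith [hs.1])
        have e : xx n + (s - xx n) = s := by ring
        rwa [e] at h
      have h2 : Real.exp (w * (s - xx n)) ≤ Real.exp w := by
        apply Real.exp_le_exp.mpr
        have := hs.2
        nlinarith
      have hvs : 0 < v s := hvpos s hs0
      have h3 : v (xx n) ≤ K * v s := by
        calc v (xx n) ≤ M * Real.exp (w * (s - xx n)) * v s := h1
          _ ≤ M * Real.exp w * v s := by
              have := mul_le_mul_of_nonneg_right (mul_le_mul_of_nonneg_left h2 hM0.le) hvs.le
              linarith
          _ = K * v s := by rw [hKdef]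
      have h4 : v (xx n) / K ≤ v s := (div_le_iff₀ hK0).mpr (by linarith [h3, mul_comm K (v s)])
      rw [hGE s hs]
      exact mul_le_mul_of_nonneg_left h4 (Real.rpow_nonneg (ha_pos n).le _)
    have hElow : a n ^ p * (v (xx n) / K) ≤ ∫ s in E, G s := by
      have h := setIntegral_ge_of_const_le (μ := volume) measurableSet_Ico
        (by rw [show Ico (xx n) (xx n + 1) = E from rfl, hEvol]; exact ENNReal.one_ne_top)
        hconst (hGint.mono_set hEsub)
      rwa [show Ico (xx n) (xx n + 1) = E from rfl, measureReal_def, hEvol, ENNReal.toReal_one, one_smul] at h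
    have h1c : 1 ≤ a n ^ p * (v (xx n) / K) := by
      rw [hap n, div_mul_div_comm]
      rw [le_div_iff₀ (mul_pos (hIpos n) hK0)]
      have e1 : ((1:ℝ)/2) ^ n * (2:ℝ) ^ n = 1 := by
        rw [← mul_pow]; norm_num
      have h2 : K * I n ≤ K * (K * v (yy n)) :=
        mul_le_mul_of_nonneg_left (hIub n) hK0.le
      have h3 : ((1:ℝ)/2) ^ n * (2 ^ n * K ^ 2 * v (yy n)) ≤ (1/2) ^ n * v (xx n) :=
        mul_le_mul_of_nonneg_left (hCmain n).le (by positivity)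
      have e2 : ((1:ℝ)/2) ^ n * (2 ^ n * K ^ 2 * v (yy n)) = K * (K * v (yy n)) := by
        have : ((1:ℝ)/2) ^ n * (2 ^ n * K ^ 2 * v (yy n))
            = ((1:ℝ)/2) ^ n * (2:ℝ) ^ n * (K ^ 2 * v (yy n)) := by ring
        rw [this, e1]; ring
      calc 1 * (I n * K) = K * I n := by ring
        _ ≤ K * (K * v (yy n)) := h2
        _ = ((1:ℝ)/2) ^ n * (2 ^ n * K ^ 2 * v (yy n)) := e2.symm
        _ ≤ (1/2) ^ n * v (xx n) := h3
    have hfull : 1 ≤ ∫ x in Ici (0:ℝ), G x := by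
      have hmono : (∫ s in E, G s) ≤ ∫ x in Ici (0:ℝ), G x := by
        refine setIntegral_mono_set hGint ?_ (HasSubset.Subset.eventuallyLE hEsub)
        exact (ae_restrict_iff' measurableSet_Ici).mpr (Eventually.of_forall hGnn)
      linarith [hElow, h1c]
    have : lpNorm p v (translateW t f) = (∫ x in Ici (0:ℝ), G x) ^ (1/p) := rfl
    rw [this]
    calc (1:ℝ) = 1 ^ (1/p) := (Real.one_rpow _).symm
      _ ≤ (∫ x in Ici (0:ℝ), G x) ^ (1/p) :=
          Real.rpow_le_rpow zero_le_one hfull (by positivity)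
  -- conclusion
  refine ⟨f, ⟨hfmeas.aestronglyMeasurable, hHint⟩, ?_⟩
  intro hT
  have h1 : ∀ᶠ t in atTop, lpNorm p v (translateW t f) < 1 :=
    hT.eventually (gt_mem_nhds one_pos)
  obtain ⟨T, hT2⟩ := eventually_atTop.mp h1
  set n : ℕ := ⌈T⌉₊ with hndef
  have hTn : T ≤ yy n - 1 - xx n := by
    have h2 : T ≤ (n : ℝ) := Nat.le_ceil T
    have h3 := hgap n
    linarith
  exact absurd (hT2 _ hTn) (not_lt.mpr (hlow n))
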